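/- arXiv:2103.14511 — 4 statements merged into one kernel-verified Lean document; each statement's English description precedes it below -/
import Mathlib

section
/- Let ρ_1, …, ρ_N be density matrices on ℂ^d, let p ∈ ℝ^N be a probability vector (p_i ≥ 0, Σ_i p_i = 1), and let ρ̄ = Σ_{i=1}^N p_i ρ_i. Then Σ_{i=1}^N p_i D_Tr(ρ_i, ρ̄) ≤ (√d / (2√2)) · ( Σ_{i=1}^N Σ_{j=1}^N p_i p_j D_HS(ρ_i, ρ_j)² )^{1/2}. -/
open Matrix Finset
open scoped ComplexOrder

/-- The trace norm `‖A‖₁ = Tr √(Aᴴ A)` of a complex matrix. -/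
noncomputable def traceNorm {d : ℕ} (A : Matrix (Fin d) (Fin d) ℂ) : ℝ :=
  (((Matrix.posSemidef_conjTranspose_mul_self A).1.eigenvectorUnitary.1 *
      diagonal (((↑) : ℝ → ℂ) ∘ Real.sqrt ∘ (Matrix.posSemidef_conjTranspose_mul_self A).1.eigenvalues) *
      (star (Matrix.posSemidef_conjTranspose_mul_self A).1.eigenvectorUnitary :
        Matrix (Fin d) (Fin d) ℂ)).trace).re

/-- The trace distance `D_Tr(ρ,σ) = ½‖ρ − σ‖₁`. -/
noncomputable def DTr {d : ℕ} (ρ σ : Matrix (Fin d) (Fin d) ℂ) : ℝ :=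
  traceNorm (ρ - σ) / 2

/-- The Hilbert–Schmidt distance `D_HS(ρ,σ) = ‖ρ − σ‖₂ = √(Tr[(ρ−σ)ᴴ(ρ−σ)])`. -/
noncomputable def DHS {d : ℕ} (ρ σ : Matrix (Fin d) (Fin d) ℂ) : ℝ :=
  Real.sqrt (((ρ - σ)ᴴ * (ρ - σ)).trace.re)

open scoped MatrixOrder in
lemma key {d : ℕ} (A : Matrix (Fin d) (Fin d) ℂ) (hA : A.IsHermitian) :
    traceNorm A ≤ Real.sqrt d * Real.sqrt ((Aᴴ * A).trace.re) := by
  set U : Matrix (Fin d) (Fin d) ℂ := (hA.eigenvectorUnitary : Matrix (Fin d) (Fin d) ℂ) with hUdef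
  set lam := hA.eigenvalues with hlam
  have hUU : star U * U = 1 := (Matrix.mem_unitaryGroup_iff').mp hA.eigenvectorUnitary.2
  set B : Matrix (Fin d) (Fin d) ℂ :=
    U * diagonal (fun i => ((|lam i| : ℝ) : ℂ)) * star U with hBdef
  have hdiagmul : ∀ (f g : Fin d → ℂ),
      (U * diagonal f * star U) * (U * diagonal g * star U)
        = U * diagonal (fun i => f i * g i) * star U := by
    intro f g
    simp only [Matrix.mul_assoc]
    rw [← Matrix.mul_assoc (star U) U, hUU, Matrix.one_mul,
      ← Matrix.mul_assoc (diagonal f) (diagonal g), diagonal_mul_diagonal]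
  have hB : B.PosSemidef := by
    refine (Matrix.posSemidef_diagonal_iff.mpr ?_).mul_mul_conjTranspose_same U
    intro i
    simpa using Complex.zero_le_real.mpr (abs_nonneg _)
  have hspec : A = U * diagonal (fun i => ((lam i : ℝ) : ℂ)) * star U := hA.spectral_theorem
  have hB2 : B ^ 2 = Aᴴ * A := by
    rw [hA.eq, pow_two, hBdef, hdiagmul]
    conv_rhs => rw [hspec]
    rw [hdiagmul]
    have hfun : (fun i => ((|lam i| : ℝ) : ℂ) * ((|lam i| : ℝ) : ℂ))
        = fun i => ((lam i : ℝ) : ℂ) * ((lam i : ℝ) : ℂ) := by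
      funext i; rw [← Complex.ofReal_mul, ← Complex.ofReal_mul, ← sq, ← sq, sq_abs]
    rw [hfun]
  have hBsqrt : B = (Matrix.posSemidef_conjTranspose_mul_self A).1.eigenvectorUnitary.1 *
      diagonal (((↑) : ℝ → ℂ) ∘ Real.sqrt ∘ (Matrix.posSemidef_conjTranspose_mul_self A).1.eigenvalues) *
      (star (Matrix.posSemidef_conjTranspose_mul_self A).1.eigenvectorUnitary :
        Matrix (Fin d) (Fin d) ℂ) := by
    have hX := (Matrix.posSemidef_conjTranspose_mul_self A)
    have e : hX.1.cfc Real.sqrt = (Matrix.posSemidef_conjTranspose_mul_self A).1.eigenvectorUnitary.1 *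
      diagonal (((↑) : ℝ → ℂ) ∘ Real.sqrt ∘ (Matrix.posSemidef_conjTranspose_mul_self A).1.eigenvalues) *
      (star (Matrix.posSemidef_conjTranspose_mul_self A).1.eigenvectorUnitary :
        Matrix (Fin d) (Fin d) ℂ) := by
      simp [Matrix.IsHermitian.cfc, Unitary.conjStarAlgAut_apply]
    rw [← e, ← hX.1.cfc_eq, ← cfcₙ_eq_cfc (hf0 := Real.sqrt_zero),
      ← CFC.sqrt_eq_real_sqrt _ hX.nonneg, CFC.sqrt_unique (by rw [← sq]; exact hB2) hB.nonneg]
  have htr : traceNorm A = ∑ i, |lam i| := by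
    rw [traceNorm, ← hBsqrt, hBdef, Matrix.trace_mul_cycle, hUU, Matrix.one_mul,
      trace_diagonal]
    simp [Complex.re_sum]
  have htr2 : (Aᴴ * A).trace.re = ∑ i, (lam i) ^ 2 := by
    have h3 : Aᴴ * A = U * diagonal (fun i => ((lam i : ℝ) : ℂ) * ((lam i : ℝ) : ℂ)) * star U := by
      rw [hA.eq]
      conv_lhs => rw [hspec, hdiagmul]
    rw [h3, Matrix.trace_mul_cycle, hUU, Matrix.one_mul, trace_diagonal]
    simp [Complex.re_sum, ← Complex.ofReal_mul, sq]
  rw [htr, htr2]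
  calc ∑ i, |lam i| = ∑ i : Fin d, 1 * |lam i| := by simp
    _ ≤ Real.sqrt (∑ i : Fin d, (1:ℝ)^2) * Real.sqrt (∑ i, |lam i| ^ 2) :=
        Real.sum_mul_le_sqrt_mul_sqrt _ _ _
    _ = Real.sqrt d * Real.sqrt (∑ i, (lam i)^2) := by simp [sq_abs]

lemma tr_sq_nonneg {d : ℕ} (A : Matrix (Fin d) (Fin d) ℂ) : 0 ≤ (Aᴴ * A).trace.re := by
  simp only [Matrix.trace, Matrix.diag, Matrix.mul_apply, conjTranspose_apply,
    Complex.re_sum]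
  refine Finset.sum_nonneg fun i _ => Finset.sum_nonneg fun j _ => ?_
  rw [Complex.star_def, Complex.normSq_eq_conj_mul_self.symm]
  exact Complex.normSq_nonneg _

lemma DHS_sq {d : ℕ} (X Y : Matrix (Fin d) (Fin d) ℂ) :
    DHS X Y ^ 2 = ((X - Y)ᴴ * (X - Y)).trace.re :=
  Real.sq_sqrt (tr_sq_nonneg _)

lemma f_symm {d : ℕ} (X Y : Matrix (Fin d) (Fin d) ℂ) :
    (Xᴴ * Y).trace.re = (Yᴴ * X).trace.re := by
  have : Yᴴ * X = (Xᴴ * Y)ᴴ := by simp [Matrix.conjTranspose_mul]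
  rw [this, Matrix.trace_conjTranspose]
  simp

lemma f_expand {d : ℕ} (X Y : Matrix (Fin d) (Fin d) ℂ) :
    ((X - Y)ᴴ * (X - Y)).trace.re
      = (Xᴴ * X).trace.re - 2 * (Xᴴ * Y).trace.re + (Yᴴ * Y).trace.re := by
  rw [conjTranspose_sub, Matrix.sub_mul, Matrix.mul_sub, Matrix.mul_sub, trace_sub, trace_sub,
    trace_sub]
  simp only [Complex.sub_re]
  rw [f_symm Y X]
  ring

/-- `Σᵢ pᵢ D_Tr(ρᵢ, ρ̄) ≤ (√d/(2√2)) · (Σᵢⱼ pᵢ pⱼ D_HS(ρᵢ,ρⱼ)²)^{1/2}`. -/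
theorem meanTraceDist_le_sqrt_meanSquaredHS (d N : ℕ)
    (ρ : Fin N → Matrix (Fin d) (Fin d) ℂ)
    (hρ : ∀ i, (ρ i).PosSemidef ∧ (ρ i).trace = 1)
    (p : Fin N → ℝ) (hp : ∀ i, 0 ≤ p i) (hps : ∑ i, p i = 1)
    (ρbar : Matrix (Fin d) (Fin d) ℂ) (hbar : ρbar = ∑ i, (p i : ℂ) • ρ i) :
    ∑ i, p i * DTr (ρ i) ρbar
      ≤ (Real.sqrt d / (2 * Real.sqrt 2)) *
        Real.sqrt (∑ i, ∑ j, p i * p j * (DHS (ρ i) (ρ j)) ^ 2) := by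
  have hHbar : ρbar.IsHermitian := by
    rw [hbar, Matrix.IsHermitian, conjTranspose_sum]
    refine Finset.sum_congr rfl fun i _ => ?_
    rw [conjTranspose_smul, (hρ i).1.1.eq]
    simp [Complex.star_def, Complex.conj_ofReal]
  -- G matrix of inner products
  set G : Fin N → Fin N → ℝ := fun i j => (((ρ i)ᴴ) * ρ j).trace.re with hG
  have hGsymm : ∀ i j, G i j = G j i := fun i j => f_symm _ _
  have hlin : ∀ X : Matrix (Fin d) (Fin d) ℂ,
      (Xᴴ * ρbar).trace.re = ∑ j, p j * (Xᴴ * ρ j).trace.re := by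
    intro X
    rw [hbar, Matrix.mul_sum, trace_sum]
    simp [Matrix.mul_smul, Complex.re_sum, Complex.re_ofReal_mul]
  set K : ℝ := ∑ i, ∑ j, p i * p j * G i j with hK
  have hKbar : (ρbarᴴ * ρbar).trace.re = K := by
    rw [hlin ρbar, hK]
    refine Finset.sum_congr rfl fun j _ => ?_
    rw [f_symm, hlin (ρ j), Finset.mul_sum]
    exact Finset.sum_congr rfl fun i _ =>
      show p j * (p i * G j i) = p j * p i * G j i by ring
  have hx2 : ∀ i, DHS (ρ i) ρbar ^ 2 = G i i - 2 * ∑ j, p j * G i j + K := by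
    intro i
    rw [DHS_sq, f_expand, hlin (ρ i), hKbar]
  set T : ℝ := ∑ i, p i * G i i with hT
  have hA : ∑ i, p i * ∑ j, p j * G i j = K := by
    rw [hK]
    refine Finset.sum_congr rfl fun i _ => ?_
    rw [Finset.mul_sum]
    exact Finset.sum_congr rfl fun j _ => by ring
  have hC : ∑ i : Fin N, p i * K = K := by rw [← Finset.sum_mul, hps, one_mul]
  have h1 : ∑ i, p i * DHS (ρ i) ρbar ^ 2 = T - K := by
    calc ∑ i, p i * DHS (ρ i) ρbar ^ 2
        = ∑ i, (p i * G i i - 2 * (p i * ∑ j, p j * G i j) + p i * K) :=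
          Finset.sum_congr rfl fun i _ => by rw [hx2 i]; ring
      _ = T - 2 * (∑ i, p i * ∑ j, p j * G i j) + ∑ i : Fin N, p i * K := by
          rw [Finset.sum_add_distrib, Finset.sum_sub_distrib, ← Finset.mul_sum]
      _ = T - K := by rw [hA, hC]; ring
  have e1 : ∀ i, ∑ j, p i * p j * G i i = p i * G i i := by
    intro i
    calc ∑ j, p i * p j * G i i = (p i * G i i) * ∑ j, p j := by
          rw [Finset.mul_sum]; exact Finset.sum_congr rfl fun j _ => by ring
      _ = p i * G i i := by rw [hps, mul_one]
  have h2 : (∑ i, ∑ j, p i * p j * DHS (ρ i) (ρ j) ^ 2) = 2 * (T - K) := by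
    calc ∑ i, ∑ j, p i * p j * DHS (ρ i) (ρ j) ^ 2
        = ∑ i, ∑ j, (p i * p j * G i i + p i * p j * G j j - 2 * (p i * p j * G i j)) := by
          refine Finset.sum_congr rfl fun i _ => Finset.sum_congr rfl fun j _ => ?_
          rw [DHS_sq, f_expand]
          show p i * p j * (G i i - 2 * G i j + G j j) = _
          ring
      _ = (∑ i, ∑ j, p i * p j * G i i) + (∑ i, ∑ j, p i * p j * G j j)
            - 2 * ∑ i, ∑ j, p i * p j * G i j := by
          simp only [Finset.sum_add_distrib, Finset.sum_sub_distrib, ← Finset.mul_sum]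
      _ = T + T - 2 * K := by
          rw [← hK]
          congr 2
          · exact Finset.sum_congr rfl fun i _ => e1 i
          · rw [Finset.sum_comm, hT]
            refine Finset.sum_congr rfl fun j _ => ?_
            calc ∑ i, p i * p j * G j j = (p j * G j j) * ∑ i, p i := by
                  rw [Finset.mul_sum]; exact Finset.sum_congr rfl fun i _ => by ring
              _ = p j * G j j := by rw [hps, mul_one]
      _ = 2 * (T - K) := by ring
  have hSnn : 0 ≤ ∑ i, ∑ j, p i * p j * DHS (ρ i) (ρ j) ^ 2 :=
    Finset.sum_nonneg fun i _ => Finset.sum_nonneg fun j _ =>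
      mul_nonneg (mul_nonneg (hp i) (hp j)) (sq_nonneg _)
  have hhalf : ∑ i, p i * DHS (ρ i) ρbar ^ 2
      = (∑ i, ∑ j, p i * p j * DHS (ρ i) (ρ j) ^ 2) / 2 := by
    rw [h1, h2]; ring
  have hDTr : ∀ i, DTr (ρ i) ρbar ≤ Real.sqrt d / 2 * DHS (ρ i) ρbar := by
    intro i
    have h := key (ρ i - ρbar) ((hρ i).1.1.sub hHbar)
    rw [DTr, DHS]
    linarith [h]
  have step1 : ∑ i, p i * DTr (ρ i) ρbar
      ≤ Real.sqrt d / 2 * ∑ i, p i * DHS (ρ i) ρbar := by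
    rw [Finset.mul_sum]
    refine Finset.sum_le_sum fun i _ => ?_
    calc p i * DTr (ρ i) ρbar ≤ p i * (Real.sqrt d / 2 * DHS (ρ i) ρbar) :=
          mul_le_mul_of_nonneg_left (hDTr i) (hp i)
      _ = Real.sqrt d / 2 * (p i * DHS (ρ i) ρbar) := by ring
  have step2 : ∑ i, p i * DHS (ρ i) ρbar
      ≤ Real.sqrt (∑ i, p i * DHS (ρ i) ρbar ^ 2) := by
    have cs := Real.sum_mul_le_sqrt_mul_sqrt Finset.univ
      (fun i => Real.sqrt (p i)) (fun i => Real.sqrt (p i) * DHS (ρ i) ρbar)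
    have e4 : ∑ i, Real.sqrt (p i) * (Real.sqrt (p i) * DHS (ρ i) ρbar)
        = ∑ i, p i * DHS (ρ i) ρbar :=
      Finset.sum_congr rfl fun i _ => by
        rw [← mul_assoc, Real.mul_self_sqrt (hp i)]
    have e5 : ∑ i : Fin N, Real.sqrt (p i) ^ 2 = 1 := by
      rw [← hps]; exact Finset.sum_congr rfl fun i _ => Real.sq_sqrt (hp i)
    have e6 : ∑ i, (Real.sqrt (p i) * DHS (ρ i) ρbar) ^ 2
        = ∑ i, p i * DHS (ρ i) ρbar ^ 2 :=
      Finset.sum_congr rfl fun i _ => by rw [mul_pow, Real.sq_sqrt (hp i)]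
    rw [e4, e5, e6, Real.sqrt_one, one_mul] at cs
    exact cs
  have hdnn : (0:ℝ) ≤ Real.sqrt d / 2 := by positivity
  calc ∑ i, p i * DTr (ρ i) ρbar
      ≤ Real.sqrt d / 2 * ∑ i, p i * DHS (ρ i) ρbar := step1
    _ ≤ Real.sqrt d / 2 * Real.sqrt (∑ i, p i * DHS (ρ i) ρbar ^ 2) :=
        mul_le_mul_of_nonneg_left step2 hdnn
    _ = Real.sqrt d / 2 * (Real.sqrt (∑ i, ∑ j, p i * p j * DHS (ρ i) (ρ j) ^ 2) / Real.sqrt 2) := by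
        rw [hhalf, Real.sqrt_div hSnn]
    _ = (Real.sqrt d / (2 * Real.sqrt 2)) *
        Real.sqrt (∑ i, ∑ j, p i * p j * (DHS (ρ i) (ρ j)) ^ 2) := by
        ring
end

section
/- Let ρ_1, …, ρ_N be density matrices on ℂ^d and let p ∈ ℝ^N be a probability vector (p_i ≥ 0, Σ_i p_i = 1). Then the sum over all triples of pairwise distinct indices satisfies Σ_{i≠j≠k, all distinct} p_i p_j p_k Re(Tr[ρ_i ρ_j ρ_k]) ≤ 2 Σ_{i≠j} p_i p_j (1 − p_i − p_j) Tr[ρ_i ρ_j²]. -/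
open Matrix Finset
open scoped ComplexOrder

lemma trace_re_nonneg {d : ℕ} {A : Matrix (Fin d) (Fin d) ℂ} (hA : A.PosSemidef) :
    0 ≤ A.trace.re := by
  have h : ∀ i, 0 ≤ (A i i).re := fun i => by
    have h0 : 0 ≤ A i i := by
      exact hA.diag_nonneg
    exact (Complex.le_def.mp h0).1
  rw [Matrix.trace, Complex.re_sum]
  exact Finset.sum_nonneg fun i _ => h i

lemma trace_prod_re_nonneg {d : ℕ} {A B : Matrix (Fin d) (Fin d) ℂ}
    (hA : A.PosSemidef) (hB : B.IsHermitian) : 0 ≤ (A * (B * B)).trace.re := by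
  have h : (B * A * Bᴴ).PosSemidef := hA.mul_mul_conjTranspose_same B
  have := trace_re_nonneg h
  have e : (A * (B * B)).trace = (B * A * B).trace := by
    rw [← mul_assoc, trace_mul_comm, ← mul_assoc]
  rw [e]; rwa [hB.eq] at this

lemma key_triple {d : ℕ} {A B C : Matrix (Fin d) (Fin d) ℂ}
    (hA : A.PosSemidef) (hB : B.PosSemidef) (hC : C.PosSemidef) :
    ((A * B * C).trace).re ≤ (1/2) * (((B * (A * A)).trace).re + ((B * (C * C)).trace).re) := by
  have hH : (A - C).IsHermitian := hA.1.sub hC.1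
  have h0 : 0 ≤ (B * ((A - C) * (A - C))).trace.re := trace_prod_re_nonneg hB hH
  have e1 : (A * B * C).trace = (B * (C * A)).trace := by
    rw [trace_mul_comm, ← mul_assoc, trace_mul_comm]
  have e2 : ((B * (A * C)).trace).re = ((B * (C * A)).trace).re := by
    have h1 : (B * (C * A))ᴴ = A * C * B := by
      rw [conjTranspose_mul, conjTranspose_mul, hA.1.eq, hB.1.eq, hC.1.eq, mul_assoc]
    have h2 : (B * (A * C)).trace = star ((B * (C * A)).trace) := by
      rw [← trace_conjTranspose, h1, trace_mul_comm, mul_assoc]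
    rw [h2, Complex.star_def, Complex.conj_re]
  have exp : (B * ((A - C) * (A - C))).trace.re
      = (B * (A * A)).trace.re - (B * (A * C)).trace.re
        - (B * (C * A)).trace.re + (B * (C * C)).trace.re := by
    simp only [mul_sub, sub_mul, trace_sub, Complex.sub_re]
    ring
  rw [e1]
  rw [exp, e2] at h0
  linarith

section sums
variable {N : ℕ}

lemma pair_ite (f : Fin N → Fin N → ℝ) :
    ∑ i, ∑ j ∈ univ.erase i, f i j = ∑ i, ∑ j, if i = j then 0 else f i j := by
  refine sum_congr rfl fun i _ => ?_
  rw [← Finset.sum_erase (univ) (a := i) (f := fun j => if i = j then 0 else f i j) (by simp)]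
  refine sum_congr rfl fun j hj => ?_
  rw [if_neg (Ne.symm (Finset.ne_of_mem_erase hj))]

lemma triple_ite (f : Fin N → Fin N → Fin N → ℝ) :
    ∑ i, ∑ j ∈ univ.erase i, ∑ k ∈ (univ.erase i).erase j, f i j k
    = ∑ i, ∑ j, ∑ k, if i = j ∨ i = k ∨ j = k then 0 else f i j k := by
  refine sum_congr rfl fun i _ => ?_
  rw [← Finset.sum_erase (univ) (a := i)
      (f := fun j => ∑ k, if i = j ∨ i = k ∨ j = k then 0 else f i j k) (by simp)]
  refine sum_congr rfl fun j hj => ?_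
  have hji : i ≠ j := Ne.symm (Finset.ne_of_mem_erase hj)
  rw [← Finset.sum_erase (univ) (a := i)
      (f := fun k => if i = j ∨ i = k ∨ j = k then 0 else f i j k) (by simp),
    ← Finset.sum_erase (univ.erase i) (a := j)
      (f := fun k => if i = j ∨ i = k ∨ j = k then 0 else f i j k) (by simp)]
  refine sum_congr rfl fun k hk => ?_
  have hki : k ≠ i := Finset.ne_of_mem_erase (Finset.mem_of_mem_erase hk)
  have hkj : k ≠ j := Finset.ne_of_mem_erase hk
  rw [if_neg (by simp only [not_or]; exact ⟨hji, Ne.symm hki, Ne.symm hkj⟩)]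

lemma pair_swap (f : Fin N → Fin N → ℝ) :
    ∑ i, ∑ j ∈ univ.erase i, f i j = ∑ i, ∑ j ∈ univ.erase i, f j i := by
  rw [pair_ite, pair_ite, Finset.sum_comm]
  exact sum_congr rfl fun i _ => sum_congr rfl fun j _ => if_congr eq_comm rfl rfl

lemma triple_swap13 (f : Fin N → Fin N → Fin N → ℝ) :
    ∑ i, ∑ j ∈ univ.erase i, ∑ k ∈ (univ.erase i).erase j, f i j k
    = ∑ i, ∑ j ∈ univ.erase i, ∑ k ∈ (univ.erase i).erase j, f k j i := by
  rw [triple_ite, triple_ite]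
  calc (∑ i, ∑ j, ∑ k, if i = j ∨ i = k ∨ j = k then 0 else f i j k : ℝ)
      = ∑ j, ∑ i, ∑ k, if i = j ∨ i = k ∨ j = k then 0 else f i j k := Finset.sum_comm
    _ = ∑ j, ∑ k, ∑ i, if i = j ∨ i = k ∨ j = k then 0 else f i j k :=
        sum_congr rfl fun j _ => Finset.sum_comm
    _ = ∑ k, ∑ j, ∑ i, if i = j ∨ i = k ∨ j = k then 0 else f i j k := Finset.sum_comm
    _ = ∑ i, ∑ j, ∑ k, if i = j ∨ i = k ∨ j = k then 0 else f k j i := by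
        refine sum_congr rfl fun x _ => sum_congr rfl fun y _ => sum_congr rfl fun z _ => ?_
        exact if_congr (by constructor <;> rintro (h | h | h) <;> simp [h]) rfl rfl

end sums

/-- For density matrices `ρ₁, …, ρ_N` and a probability vector `p`,
`Σ_{i≠j≠k distinct} pᵢ pⱼ p_k Re Tr[ρᵢ ρⱼ ρ_k] ≤ 2 Σ_{i≠j} pᵢ pⱼ (1 − pᵢ − pⱼ) Tr[ρᵢ ρⱼ²]`. -/
theorem triple_trace_sum_le (d N : ℕ) (ρ : Fin N → Matrix (Fin d) (Fin d) ℂ)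
    (hρ : ∀ i, (ρ i).PosSemidef ∧ (ρ i).trace = 1)
    (p : Fin N → ℝ) (hp : ∀ i, 0 ≤ p i) (hps : ∑ i, p i = 1) :
    ∑ i, ∑ j ∈ univ.erase i, ∑ k ∈ (univ.erase i).erase j,
        p i * p j * p k * ((ρ i * ρ j * ρ k).trace).re
      ≤ 2 * ∑ i, ∑ j ∈ univ.erase i,
          p i * p j * (1 - p i - p j) * ((ρ i * (ρ j * ρ j)).trace).re := by
  set T : Fin N → Fin N → ℝ := fun i j => ((ρ i * (ρ j * ρ j)).trace).re with hT
  have hq : ∀ i j : Fin N, j ≠ i → ∑ k ∈ (univ.erase i).erase j, p k = 1 - p i - p j := by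
    intro i j hji
    rw [Finset.sum_erase_eq_sub (Finset.mem_erase.mpr ⟨hji, Finset.mem_univ j⟩),
      Finset.sum_erase_eq_sub (Finset.mem_univ i), hps]
  have hqnn : ∀ i j : Fin N, j ≠ i → 0 ≤ 1 - p i - p j := by
    intro i j hji
    rw [← hq i j hji]
    exact Finset.sum_nonneg fun k _ => hp k
  set S : ℝ := ∑ i, ∑ j ∈ univ.erase i, p i * p j * (1 - p i - p j) * T j i with hS
  have hS0 : 0 ≤ S := by
    refine Finset.sum_nonneg fun i _ => Finset.sum_nonneg fun j hj => ?_
    have hji : j ≠ i := Finset.ne_of_mem_erase hj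
    have h1 : 0 ≤ T j i := trace_prod_re_nonneg (hρ j).1 (hρ i).1.1
    exact mul_nonneg (mul_nonneg (mul_nonneg (hp i) (hp j)) (hqnn i j hji)) h1
  have step1 : ∑ i, ∑ j ∈ univ.erase i, ∑ k ∈ (univ.erase i).erase j,
        p i * p j * p k * ((ρ i * ρ j * ρ k).trace).re
      ≤ ∑ i, ∑ j ∈ univ.erase i, ∑ k ∈ (univ.erase i).erase j,
        p i * p j * p k * ((1/2) * (T j i + T j k)) := by
    refine Finset.sum_le_sum fun i _ => Finset.sum_le_sum fun j _ =>
      Finset.sum_le_sum fun k _ => ?_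
    refine mul_le_mul_of_nonneg_left ?_ (mul_nonneg (mul_nonneg (hp i) (hp j)) (hp k))
    exact key_triple (hρ i).1 (hρ j).1 (hρ k).1
  have step2 : ∑ i, ∑ j ∈ univ.erase i, ∑ k ∈ (univ.erase i).erase j,
        p i * p j * p k * ((1/2) * (T j i + T j k)) = S := by
    have hsplit : ∑ i, ∑ j ∈ univ.erase i, ∑ k ∈ (univ.erase i).erase j,
          p i * p j * p k * ((1/2) * (T j i + T j k))
        = (1/2) * ((∑ i, ∑ j ∈ univ.erase i, ∑ k ∈ (univ.erase i).erase j,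
            p i * p j * p k * T j i)
          + ∑ i, ∑ j ∈ univ.erase i, ∑ k ∈ (univ.erase i).erase j,
            p i * p j * p k * T j k) := by
      rw [mul_add, Finset.mul_sum, Finset.mul_sum, ← Finset.sum_add_distrib]
      refine sum_congr rfl fun i _ => ?_
      rw [Finset.mul_sum, Finset.mul_sum, ← Finset.sum_add_distrib]
      refine sum_congr rfl fun j _ => ?_
      rw [Finset.mul_sum, Finset.mul_sum, ← Finset.sum_add_distrib]
      exact sum_congr rfl fun k _ => by ring
    have hA2 : ∑ i, ∑ j ∈ univ.erase i, ∑ k ∈ (univ.erase i).erase j,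
          p i * p j * p k * T j k
        = ∑ i, ∑ j ∈ univ.erase i, ∑ k ∈ (univ.erase i).erase j,
          p i * p j * p k * T j i := by
      rw [triple_swap13 (fun i j k => p i * p j * p k * T j k)]
      exact sum_congr rfl fun i _ => sum_congr rfl fun j _ =>
        sum_congr rfl fun k _ => by ring
    have hA1 : ∑ i, ∑ j ∈ univ.erase i, ∑ k ∈ (univ.erase i).erase j,
          p i * p j * p k * T j i = S := by
      rw [hS]
      refine sum_congr rfl fun i _ => sum_congr rfl fun j hj => ?_
      have hji : j ≠ i := Finset.ne_of_mem_erase hj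
      have : ∑ k ∈ (univ.erase i).erase j, p i * p j * p k * T j i
          = (p i * p j * T j i) * ∑ k ∈ (univ.erase i).erase j, p k := by
        rw [Finset.mul_sum]
        exact sum_congr rfl fun k _ => by ring
      rw [this, hq i j hji]
      ring
    rw [hsplit, hA2, hA1]
    ring
  have hSeq : ∑ i, ∑ j ∈ univ.erase i,
      p i * p j * (1 - p i - p j) * T i j = S := by
    rw [hS, pair_swap (fun i j => p i * p j * (1 - p i - p j) * T j i)]
    exact sum_congr rfl fun i _ => sum_congr rfl fun j _ => by ring
  calc ∑ i, ∑ j ∈ univ.erase i, ∑ k ∈ (univ.erase i).erase j,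
        p i * p j * p k * ((ρ i * ρ j * ρ k).trace).re
      ≤ S := le_of_le_of_eq step1 step2
    _ ≤ 2 * S := by linarith
    _ = 2 * ∑ i, ∑ j ∈ univ.erase i,
          p i * p j * (1 - p i - p j) * T i j := by rw [hSeq]
end

section
/- Let ρ_1, …, ρ_N be density matrices on ℂ^d, let p ∈ ℝ^N be a probability vector with p_i > 0 for all i, and let μ > 0. For m = (m_1, …, m_N) ∈ ℕ^N define D(m) = Σ_{i≠j} [ (m_i(m_i−1) p_j / (μ² p_i)) Tr[ρ_i²] + (m_j(m_j−1) p_i / (μ² p_j)) Tr[ρ_j²] − (2 m_i m_j / μ²) Tr[ρ_i ρ_j] ]. Then the expectation of D(m) when the coordinates m_i are independent Poisson random variables with respective means p_i μ equals the mean squared Hilbert–Schmidt distance: Σ_{m ∈ ℕ^N} ( ∏_{i=1}^N e^{−p_i μ}(p_i μ)^{m_i} / m_i! ) · D(m) = Σ_{i=1}^N Σ_{j=1}^N p_i p_j Tr[(ρ_i − ρ_j)²]. -/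
set_option maxHeartbeats 1000000

open Matrix Finset
open scoped ComplexOrder

noncomputable def pw (lam : ℝ) (n : ℕ) : ℝ := Real.exp (-lam) * lam ^ n / n.factorial

lemma pw_nonneg {lam : ℝ} (h : 0 ≤ lam) (n : ℕ) : 0 ≤ pw lam n := by
  unfold pw
  positivity

lemma summable_pw (lam : ℝ) : Summable (pw lam) := by
  have := (Real.summable_pow_div_factorial lam).mul_left (Real.exp (-lam))
  refine this.congr fun n => ?_
  unfold pw; ring

lemma tsum_pw {lam : ℝ} : ∑' n, pw lam n = 1 := by
  have hexp : Real.exp lam = ∑' n : ℕ, lam ^ n / n.factorial := by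
    rw [Real.exp_eq_exp_ℝ, NormedSpace.exp_eq_tsum_div]
  unfold pw
  rw [show (fun n : ℕ => Real.exp (-lam) * lam ^ n / n.factorial)
      = fun n : ℕ => Real.exp (-lam) * (lam ^ n / n.factorial) by funext n; ring]
  rw [tsum_mul_left, ← hexp, ← Real.exp_add]
  simp

lemma pw_succ_mul (lam : ℝ) (n : ℕ) : pw lam (n + 1) * (n + 1) = lam * pw lam n := by
  unfold pw
  rw [Nat.factorial_succ]
  push_cast
  have h1 : ((n : ℝ) + 1) ≠ 0 := by positivity
  have h2 : (n.factorial : ℝ) ≠ 0 := by exact_mod_cast n.factorial_ne_zero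
  field_simp
  ring

lemma summable_pw_mul (lam : ℝ) : Summable (fun n => pw lam n * n) := by
  rw [← summable_nat_add_iff 1]
  refine ((summable_pw lam).mul_left lam).congr fun n => ?_
  push_cast
  rw [pw_succ_mul]

lemma tsum_pw_mul {lam : ℝ} : ∑' n, pw lam n * n = lam := by
  rw [Summable.tsum_eq_zero_add (summable_pw_mul lam)]
  simp only [Nat.cast_zero, mul_zero, zero_add]
  have : (fun n : ℕ => pw lam (n + 1) * ((n : ℝ) + 1)) = fun n => lam * pw lam n := by
    funext n; rw [pw_succ_mul]
  push_cast
  rw [this, tsum_mul_left, tsum_pw, mul_one]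


lemma pw_succ2 (lam : ℝ) (n : ℕ) :
    pw lam (n + 2) * (((n + 2 : ℕ) : ℝ) * (((n + 2 : ℕ) : ℝ) - 1)) = lam * (lam * pw lam n) := by
  have e1 := pw_succ_mul lam (n + 1)
  have e2 := pw_succ_mul lam n
  push_cast at e1 e2 ⊢
  have h : pw lam (n + 1 + 1) = pw lam (n + 2) := by norm_num
  rw [h] at e1
  linear_combination ((n : ℝ) + 1) * e1 + lam * e2

lemma summable_pw_mul2 (lam : ℝ) : Summable (fun n => pw lam n * ((n : ℝ) * ((n : ℝ) - 1))) := by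
  rw [← summable_nat_add_iff 2]
  refine (((summable_pw lam).mul_left lam).mul_left lam).congr fun n => ?_
  exact (pw_succ2 lam n).symm

lemma tsum_pw_mul2 {lam : ℝ} : ∑' n, pw lam n * ((n : ℝ) * ((n : ℝ) - 1)) = lam ^ 2 := by
  have hs := summable_pw_mul2 lam
  rw [Summable.tsum_eq_zero_add hs]
  have hs1 : Summable (fun n : ℕ => pw lam (n + 1) * (((n + 1 : ℕ) : ℝ) * (((n + 1 : ℕ) : ℝ) - 1))) :=
    (summable_nat_add_iff 1).2 hs
  rw [Summable.tsum_eq_zero_add hs1]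
  have : (fun n : ℕ => pw lam (n + 1 + 1) * (((n + 1 + 1 : ℕ) : ℝ) * (((n + 1 + 1 : ℕ) : ℝ) - 1)))
      = fun n : ℕ => lam * lam * pw lam n := by
    funext n
    rw [mul_assoc]
    exact pw_succ2 lam n
  rw [this, tsum_mul_left, tsum_pw]
  norm_num
  ring

lemma pi_prod_key : ∀ {N : ℕ} (h : Fin N → ℕ → ℝ), (∀ i n, 0 ≤ h i n) → (∀ i, Summable (h i)) →
    Summable (fun m : Fin N → ℕ => ∏ i, h i (m i)) ∧
    (∑' m : Fin N → ℕ, ∏ i, h i (m i)) = ∏ i, ∑' n, h i n := by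
  intro N
  induction N with
  | zero =>
    intro h _ _
    constructor
    · exact Summable.of_finite
    · rw [tsum_eq_single (fun i => 0) (fun b hb => absurd (Subsingleton.elim b _) hb)]
      simp
  | succ n ih =>
    intro h h0 hs
    have ihp := ih (fun i : Fin n => h i.succ) (fun (i : Fin n) (k : ℕ) => h0 i.succ k) (fun i : Fin n => hs i.succ)
    have ihs : Summable (fun m : Fin n → ℕ => ∏ i, h i.succ (m i)) := ihp.1
    have iht : (∑' m : Fin n → ℕ, ∏ i, h i.succ (m i)) = ∏ i : Fin n, ∑' k, h i.succ k := ihp.2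
    have g0 : ∀ m : Fin n → ℕ, 0 ≤ ∏ i, h i.succ (m i) :=
      fun m => Finset.prod_nonneg fun i _ => h0 i.succ (m i)
    have key : Summable (fun x : ℕ × (Fin n → ℕ) => h 0 x.1 * ∏ i, h i.succ (x.2 i)) :=
      by apply Summable.mul_of_nonneg (hs 0) ihs (fun k => h0 0 k) g0
    have hcomp : ∀ m : Fin (n + 1) → ℕ,
        h 0 (((Fin.consEquiv (fun _ : Fin (n + 1) => ℕ)).symm) m).1 * ∏ i : Fin n, h i.succ ((((Fin.consEquiv (fun _ : Fin (n + 1) => ℕ)).symm) m).2 i)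
          = ∏ i : Fin (n + 1), h i (m i) := by
      intro m
      rw [Fin.prod_univ_succ]
      rfl
    constructor
    · exact ((((Fin.consEquiv (fun _ : Fin (n + 1) => ℕ)).symm).summable_iff
        (f := fun x : ℕ × (Fin n → ℕ) => h 0 x.1 * ∏ i : Fin n, h i.succ (x.2 i))).2 key).congr hcomp
    · have habs : ∀ {ι : Type} (f : ι → ℝ), (∀ x, 0 ≤ f x) → Summable f →
          Summable (fun x => ‖f x‖) := by
        intro ι f hf hsf
        exact hsf.congr fun x => (Real.norm_of_nonneg (hf x)).symm
      calc ∑' m : Fin (n + 1) → ℕ, ∏ i, h i (m i)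
          = ∑' x : ℕ × (Fin n → ℕ), h 0 x.1 * ∏ i : Fin n, h i.succ (x.2 i) := by
            rw [← Equiv.tsum_eq ((Fin.consEquiv (fun _ : Fin (n + 1) => ℕ)).symm)
              (fun x : ℕ × (Fin n → ℕ) => h 0 x.1 * ∏ i : Fin n, h i.succ (x.2 i))]
            exact (tsum_congr hcomp).symm
        _ = (∑' k, h 0 k) * ∑' m : Fin n → ℕ, ∏ i, h i.succ (m i) :=
            (tsum_mul_tsum_of_summable_norm
              (habs _ (fun k => h0 0 k) (hs 0)) (habs _ g0 ihs)).symm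
        _ = ∏ i, ∑' k, h i k := by
            rw [iht, Fin.prod_univ_succ]

lemma q_nonneg (n : ℕ) : 0 ≤ (n : ℝ) * ((n : ℝ) - 1) := by
  rcases n with _ | m
  · simp
  · push_cast
    nlinarith [Nat.cast_nonneg (α := ℝ) m]

lemma exp_q {N : ℕ} (lm : Fin N → ℝ) (hlm : ∀ k, 0 ≤ lm k) (i : Fin N) :
    Summable (fun m : Fin N → ℕ =>
      (∏ k, pw (lm k) (m k)) * ((m i : ℝ) * ((m i : ℝ) - 1))) ∧
    ∑' m : Fin N → ℕ, (∏ k, pw (lm k) (m k)) * ((m i : ℝ) * ((m i : ℝ) - 1)) = lm i ^ 2 := by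
  have hpt : ∀ m : Fin N → ℕ,
      (∏ k, pw (lm k) (m k) * (if k = i then (m k : ℝ) * ((m k : ℝ) - 1) else 1))
      = (∏ k, pw (lm k) (m k)) * ((m i : ℝ) * ((m i : ℝ) - 1)) := by
    intro m
    rw [Finset.prod_mul_distrib,
      Finset.prod_ite_eq' univ i (fun k => (m k : ℝ) * ((m k : ℝ) - 1))]
    simp
  obtain ⟨S, T⟩ := pi_prod_key
    (fun k n => pw (lm k) n * (if k = i then (n : ℝ) * ((n : ℝ) - 1) else 1))
    (fun k n => mul_nonneg (pw_nonneg (hlm k) n) (by split <;> [exact q_nonneg n; norm_num]))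
    (fun k => by
      by_cases hk : k = i
      · subst hk
        simpa using summable_pw_mul2 (lm k)
      · simpa [hk] using summable_pw (lm k))
  constructor
  · exact S.congr hpt
  · calc ∑' m : Fin N → ℕ, (∏ k, pw (lm k) (m k)) * ((m i : ℝ) * ((m i : ℝ) - 1))
        = ∑' m : Fin N → ℕ,
            ∏ k, pw (lm k) (m k) * (if k = i then (m k : ℝ) * ((m k : ℝ) - 1) else 1) :=
          (tsum_congr hpt).symm
      _ = ∏ k, ∑' n, pw (lm k) n * (if k = i then (n : ℝ) * ((n : ℝ) - 1) else 1) := T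
      _ = lm i ^ 2 := by
          rw [Finset.prod_eq_single i (fun b _ hb => by simp [hb, tsum_pw]) (by simp)]
          simpa using tsum_pw_mul2 (lam := lm i)

lemma exp_mm {N : ℕ} (lm : Fin N → ℝ) (hlm : ∀ k, 0 ≤ lm k) (i j : Fin N) (hij : i ≠ j) :
    Summable (fun m : Fin N → ℕ =>
      (∏ k, pw (lm k) (m k)) * ((m i : ℝ) * (m j : ℝ))) ∧
    ∑' m : Fin N → ℕ, (∏ k, pw (lm k) (m k)) * ((m i : ℝ) * (m j : ℝ)) = lm i * lm j := by
  have hpt : ∀ m : Fin N → ℕ,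
      (∏ k, pw (lm k) (m k) * ((if k = i then (m k : ℝ) else 1) * (if k = j then (m k : ℝ) else 1)))
      = (∏ k, pw (lm k) (m k)) * ((m i : ℝ) * (m j : ℝ)) := by
    intro m
    rw [Finset.prod_mul_distrib, Finset.prod_mul_distrib,
      Finset.prod_ite_eq' univ i (fun k => (m k : ℝ)),
      Finset.prod_ite_eq' univ j (fun k => (m k : ℝ))]
    simp
  obtain ⟨S, T⟩ := pi_prod_key
    (fun k n => pw (lm k) n * ((if k = i then (n : ℝ) else 1) * (if k = j then (n : ℝ) else 1)))
    (fun k n => mul_nonneg (pw_nonneg (hlm k) n)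
      (mul_nonneg (by split <;> [exact Nat.cast_nonneg n; norm_num])
        (by split <;> [exact Nat.cast_nonneg n; norm_num])))
    (fun k => by
      by_cases hk : k = i
      · subst hk
        have : k ≠ j := hij
        simpa [this] using summable_pw_mul (lm k)
      · by_cases hk' : k = j
        · subst hk'
          simpa [hk] using summable_pw_mul (lm k)
        · simpa [hk, hk'] using summable_pw (lm k))
  constructor
  · exact S.congr hpt
  · calc ∑' m : Fin N → ℕ, (∏ k, pw (lm k) (m k)) * ((m i : ℝ) * (m j : ℝ))
        = ∑' m : Fin N → ℕ, ∏ k, pw (lm k) (m k) *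
            ((if k = i then (m k : ℝ) else 1) * (if k = j then (m k : ℝ) else 1)) :=
          (tsum_congr hpt).symm
      _ = ∏ k, ∑' n, pw (lm k) n *
            ((if k = i then (n : ℝ) else 1) * (if k = j then (n : ℝ) else 1)) := T
      _ = ∏ k ∈ ({i, j} : Finset (Fin N)), ∑' n, pw (lm k) n *
            ((if k = i then (n : ℝ) else 1) * (if k = j then (n : ℝ) else 1)) := by
          refine (Finset.prod_subset (Finset.subset_univ _) fun k _ hk => ?_).symm
          simp only [Finset.mem_insert, Finset.mem_singleton, not_or] at hk
          simp [hk.1, hk.2, tsum_pw]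
      _ = lm i * lm j := by
          rw [Finset.prod_pair hij]
          have h1 : (∑' n, pw (lm i) n *
              ((if i = i then (n : ℝ) else 1) * (if i = j then (n : ℝ) else 1))) = lm i := by
            simpa [hij] using tsum_pw_mul (lam := lm i)
          have h2 : (∑' n, pw (lm j) n *
              ((if j = i then (n : ℝ) else 1) * (if j = j then (n : ℝ) else 1))) = lm j := by
            simpa [hij.symm] using tsum_pw_mul (lam := lm j)
          rw [h1, h2]

open Matrix in
lemma trace_sq_re {d : ℕ} (A B : Matrix (Fin d) (Fin d) ℂ) :
    (((A - B) * (A - B)).trace).re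
    = ((A * A).trace).re + ((B * B).trace).re - 2 * ((A * B).trace).re := by
  rw [sub_mul, mul_sub, mul_sub, Matrix.trace_sub, Matrix.trace_sub, Matrix.trace_sub,
    Matrix.trace_mul_comm B A]
  simp only [Complex.sub_re]
  ring

/-- The Poissonized estimator `D(m)` is unbiased for the mean squared
Hilbert–Schmidt distance: averaging
`D(m) = Σ_{i≠j} [ mᵢ(mᵢ−1)pⱼ/(μ²pᵢ) Tr[ρᵢ²] + mⱼ(mⱼ−1)pᵢ/(μ²pⱼ) Tr[ρⱼ²] − (2mᵢmⱼ/μ²) Tr[ρᵢρⱼ] ]`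
over independent Poisson variables `mᵢ ∼ Poi(pᵢμ)` gives `Σᵢⱼ pᵢ pⱼ Tr[(ρᵢ − ρⱼ)²]`. -/
theorem poissonized_estimator_unbiased (d N : ℕ)
    (ρ : Fin N → Matrix (Fin d) (Fin d) ℂ)
    (hρ : ∀ i, (ρ i).PosSemidef ∧ (ρ i).trace = 1)
    (p : Fin N → ℝ) (hp : ∀ i, 0 < p i) (hps : ∑ i, p i = 1)
    (μ : ℝ) (hμ : 0 < μ) :
    (∑' m : Fin N → ℕ,
      (∏ i, Real.exp (-(p i * μ)) * (p i * μ) ^ (m i) / Nat.factorial (m i)) *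
      (∑ i, ∑ j ∈ univ.erase i,
        (((m i : ℝ) * ((m i : ℝ) - 1) * p j / (μ ^ 2 * p i)) * ((ρ i * ρ i).trace).re
          + ((m j : ℝ) * ((m j : ℝ) - 1) * p i / (μ ^ 2 * p j)) * ((ρ j * ρ j).trace).re
          - (2 * (m i : ℝ) * (m j : ℝ) / μ ^ 2) * ((ρ i * ρ j).trace).re)))
    = ∑ i, ∑ j, p i * p j * (((ρ i - ρ j) * (ρ i - ρ j)).trace).re := by
  have hlm0 : ∀ k : Fin N, 0 ≤ p k * μ := fun k => le_of_lt (mul_pos (hp k) hμ)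
  have hpwdef : ∀ (lam : ℝ) (n : ℕ),
      Real.exp (-lam) * lam ^ n / (Nat.factorial n : ℝ) = pw lam n := fun _ _ => rfl
  have key : ∀ i j : Fin N, j ≠ i →
      Summable (fun m : Fin N → ℕ => (∏ k, pw (p k * μ) (m k)) *
        (((m i : ℝ) * ((m i : ℝ) - 1) * p j / (μ ^ 2 * p i)) * ((ρ i * ρ i).trace).re
          + ((m j : ℝ) * ((m j : ℝ) - 1) * p i / (μ ^ 2 * p j)) * ((ρ j * ρ j).trace).re
          - (2 * (m i : ℝ) * (m j : ℝ) / μ ^ 2) * ((ρ i * ρ j).trace).re)) ∧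
      (∑' m : Fin N → ℕ, (∏ k, pw (p k * μ) (m k)) *
        (((m i : ℝ) * ((m i : ℝ) - 1) * p j / (μ ^ 2 * p i)) * ((ρ i * ρ i).trace).re
          + ((m j : ℝ) * ((m j : ℝ) - 1) * p i / (μ ^ 2 * p j)) * ((ρ j * ρ j).trace).re
          - (2 * (m i : ℝ) * (m j : ℝ) / μ ^ 2) * ((ρ i * ρ j).trace).re))
      = p i * p j * (((ρ i - ρ j) * (ρ i - ρ j)).trace).re := by
    intro i j hji
    obtain ⟨Sqi, Tqi⟩ := exp_q (fun k => p k * μ) hlm0 i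
    obtain ⟨Sqj, Tqj⟩ := exp_q (fun k => p k * μ) hlm0 j
    obtain ⟨Smm, Tmm⟩ := exp_mm (fun k => p k * μ) hlm0 i j (Ne.symm hji)
    have hpt : ∀ m : Fin N → ℕ, (∏ k, pw (p k * μ) (m k)) *
        (((m i : ℝ) * ((m i : ℝ) - 1) * p j / (μ ^ 2 * p i)) * ((ρ i * ρ i).trace).re
          + ((m j : ℝ) * ((m j : ℝ) - 1) * p i / (μ ^ 2 * p j)) * ((ρ j * ρ j).trace).re
          - (2 * (m i : ℝ) * (m j : ℝ) / μ ^ 2) * ((ρ i * ρ j).trace).re)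
        = (p j / (μ ^ 2 * p i) * ((ρ i * ρ i).trace).re) *
            ((∏ k, pw (p k * μ) (m k)) * ((m i : ℝ) * ((m i : ℝ) - 1)))
          + (p i / (μ ^ 2 * p j) * ((ρ j * ρ j).trace).re) *
            ((∏ k, pw (p k * μ) (m k)) * ((m j : ℝ) * ((m j : ℝ) - 1)))
          - (2 / μ ^ 2 * ((ρ i * ρ j).trace).re) *
            ((∏ k, pw (p k * μ) (m k)) * ((m i : ℝ) * (m j : ℝ))) := by
      intro m
      ring
    constructor
    · exact (((Sqi.mul_left _).add (Sqj.mul_left _)).sub (Smm.mul_left _)).congr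
        fun m => (hpt m).symm
    · rw [tsum_congr hpt,
        Summable.tsum_sub ((Sqi.mul_left _).add (Sqj.mul_left _)) (Smm.mul_left _),
        Summable.tsum_add (Sqi.mul_left _) (Sqj.mul_left _),
        tsum_mul_left, tsum_mul_left, tsum_mul_left, Tqi, Tqj, Tmm,
        trace_sq_re (ρ i) (ρ j)]
      have hμ' : μ ≠ 0 := ne_of_gt hμ
      have hpi : p i ≠ 0 := ne_of_gt (hp i)
      have hpj : p j ≠ 0 := ne_of_gt (hp j)
      field_simp
  simp only [hpwdef]
  calc (∑' m : Fin N → ℕ,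
      (∏ i, pw (p i * μ) (m i)) *
      (∑ i, ∑ j ∈ univ.erase i,
        (((m i : ℝ) * ((m i : ℝ) - 1) * p j / (μ ^ 2 * p i)) * ((ρ i * ρ i).trace).re
          + ((m j : ℝ) * ((m j : ℝ) - 1) * p i / (μ ^ 2 * p j)) * ((ρ j * ρ j).trace).re
          - (2 * (m i : ℝ) * (m j : ℝ) / μ ^ 2) * ((ρ i * ρ j).trace).re)))
      = ∑' m : Fin N → ℕ, ∑ i, ∑ j ∈ univ.erase i,
          (∏ k, pw (p k * μ) (m k)) *
          (((m i : ℝ) * ((m i : ℝ) - 1) * p j / (μ ^ 2 * p i)) * ((ρ i * ρ i).trace).re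
            + ((m j : ℝ) * ((m j : ℝ) - 1) * p i / (μ ^ 2 * p j)) * ((ρ j * ρ j).trace).re
            - (2 * (m i : ℝ) * (m j : ℝ) / μ ^ 2) * ((ρ i * ρ j).trace).re) := by
        refine tsum_congr fun m => ?_
        rw [Finset.mul_sum]
        exact Finset.sum_congr rfl fun i _ => Finset.mul_sum _ _ _
    _ = ∑ i, ∑ j ∈ univ.erase i, ∑' m : Fin N → ℕ,
          (∏ k, pw (p k * μ) (m k)) *
          (((m i : ℝ) * ((m i : ℝ) - 1) * p j / (μ ^ 2 * p i)) * ((ρ i * ρ i).trace).re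
            + ((m j : ℝ) * ((m j : ℝ) - 1) * p i / (μ ^ 2 * p j)) * ((ρ j * ρ j).trace).re
            - (2 * (m i : ℝ) * (m j : ℝ) / μ ^ 2) * ((ρ i * ρ j).trace).re) := by
        rw [Summable.tsum_finsetSum (fun i _ => summable_sum
          (fun j hj => (key i j (Finset.ne_of_mem_erase hj)).1))]
        exact Finset.sum_congr rfl fun i _ => Summable.tsum_finsetSum
          (fun j hj => (key i j (Finset.ne_of_mem_erase hj)).1)
    _ = ∑ i, ∑ j ∈ univ.erase i, p i * p j * (((ρ i - ρ j) * (ρ i - ρ j)).trace).re := by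
        refine Finset.sum_congr rfl fun i _ => Finset.sum_congr rfl fun j hj => ?_
        exact (key i j (Finset.ne_of_mem_erase hj)).2
    _ = ∑ i, ∑ j, p i * p j * (((ρ i - ρ j) * (ρ i - ρ j)).trace).re := by
        refine Finset.sum_congr rfl fun i _ => ?_
        rw [← Finset.sum_erase_add univ _ (Finset.mem_univ i)]
        simp
end

section
/- Let d be an even positive integer, let 0 < ε ≤ 1/8, and let N be a positive integer. Let Θ be the diagonal d×d matrix with k-th diagonal entry (−1)^k (k = 1, …, d) and ρ0 = (I_d + 8εΘ)/d. If U_1, …, U_N are drawn independently according to the Haar probability measure on U(d), then E[ (1/N²) Σ_{i=1}^N Σ_{j=1}^N Re Tr[Θ U_iᴴ U_j ρ0 U_jᴴ U_i] ] = 8ε/N. -/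
open Matrix Finset MeasureTheory
open scoped ComplexOrder

/-- The diagonal matrix `Θ` whose `k`-th diagonal entry is `(−1)^k`, `k = 1, …, d`
(index `k : Fin d` corresponds to the `(k+1)`-st entry). -/
noncomputable def Theta (d : ℕ) : Matrix (Fin d) (Fin d) ℂ :=
  Matrix.diagonal fun k => (-1 : ℂ) ^ ((k : ℕ) + 1)

/-- The state `ρ0 = (I_d + 8 ε Θ)/d`. -/
noncomputable def rho0 (d : ℕ) (ε : ℝ) : Matrix (Fin d) (Fin d) ℂ :=
  ((d : ℂ))⁻¹ • (1 + ((8 * ε : ℝ) : ℂ) • Theta d)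

/- ### Auxiliary material -/

instance matrixSecondCountable (d : ℕ) :
    SecondCountableTopology (Matrix (Fin d) (Fin d) ℂ) :=
  inferInstanceAs (SecondCountableTopology (Fin d → Fin d → ℂ))

instance unitarySecondCountable (d : ℕ) :
    SecondCountableTopology (Matrix.unitaryGroup (Fin d) ℂ) :=
  TopologicalSpace.secondCountableTopology_induced _ _ Subtype.val

instance unitaryCompact (d : ℕ) : CompactSpace (Matrix.unitaryGroup (Fin d) ℂ) := by
  suffices h : IsCompact (Matrix.unitaryGroup (Fin d) ℂ : Set (Matrix (Fin d) (Fin d) ℂ)) by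
    exact isCompact_iff_compactSpace.mp h
  have hK : IsCompact {A : Matrix (Fin d) (Fin d) ℂ |
      ∀ i, ∀ j, A i j ∈ Metric.closedBall (0:ℂ) 1} := by
    have : {A : Matrix (Fin d) (Fin d) ℂ | ∀ i, ∀ j, A i j ∈ Metric.closedBall (0:ℂ) 1}
        = Set.pi Set.univ
          (fun _ : Fin d => Set.pi Set.univ fun _ : Fin d => Metric.closedBall (0:ℂ) 1) := by
      ext A
      constructor
      · intro h i _
        intro j _
        exact h i j
      · intro h i j
        exact h i (Set.mem_univ i) j (Set.mem_univ j)
    rw [this]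
    exact isCompact_univ_pi fun i => isCompact_univ_pi fun j => isCompact_closedBall 0 1
  refine hK.of_isClosed_subset ?_ ?_
  · have h1 : IsClosed {A : Matrix (Fin d) (Fin d) ℂ | star A * A = 1} :=
      isClosed_eq (by exact (Continuous.matrix_conjTranspose continuous_id).matrix_mul continuous_id) continuous_const
    have h2 : IsClosed {A : Matrix (Fin d) (Fin d) ℂ | A * star A = 1} :=
      isClosed_eq (by exact continuous_id.matrix_mul (Continuous.matrix_conjTranspose continuous_id)) continuous_const
    have : (Matrix.unitaryGroup (Fin d) ℂ : Set (Matrix (Fin d) (Fin d) ℂ))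
        = {A | star A * A = 1} ∩ {A | A * star A = 1} := by
      ext A; exact Iff.rfl
    rw [this]
    exact h1.inter h2
  · intro A hA i j
    have h : A * star A = 1 := hA.2
    have hdiag : (A * star A) i i = 1 := by rw [h]; simp [Matrix.one_apply]
    rw [Matrix.mul_apply] at hdiag
    have hre : ∑ l, Complex.normSq (A i l) = 1 := by
      have := congrArg Complex.re hdiag
      simpa [Matrix.star_apply, Complex.mul_conj, Complex.re_sum] using this
    have hle : Complex.normSq (A i j) ≤ 1 := by
      rw [← hre]
      exact Finset.single_le_sum (fun l _ => Complex.normSq_nonneg _) (Finset.mem_univ j)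
    simp only [Metric.mem_closedBall, dist_zero_right]
    rw [Complex.normSq_eq_norm_sq] at hle
    nlinarith [norm_nonneg (A i j)]

/-- A continuous real function on a compact space is integrable w.r.t. a finite measure. -/
lemma continuous_integrable_of_compact {X : Type*} [TopologicalSpace X] [CompactSpace X]
    [T2Space X] [MeasurableSpace X] [OpensMeasurableSpace X] (μ : Measure X)
    [IsFiniteMeasure μ] {f : X → ℝ} (hf : Continuous f) : Integrable f μ := by
  have h := hf.continuousOn.integrableOn_compact (isCompact_univ) (μ := μ)
  rwa [IntegrableOn, Measure.restrict_univ] at h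

noncomputable def Wmat (d : ℕ) [NeZero d] : Matrix (Fin d) (Fin d) ℂ :=
  Matrix.of fun k l => if k + 1 = l then 1 else 0

lemma Wmat_mem (d : ℕ) [NeZero d] : Wmat d ∈ Matrix.unitaryGroup (Fin d) ℂ := by
  rw [Matrix.mem_unitaryGroup_iff]
  ext a b
  simp only [apply_ite (star : ℂ → ℂ), Matrix.mul_apply, Wmat, Matrix.star_apply,
    Matrix.of_apply, star_one, star_zero, ite_mul, one_mul, zero_mul]
  rw [Finset.sum_eq_single (a + 1)]
  · simp [Matrix.one_apply, eq_comm]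
  · intro c _ hc; simp [Ne.symm hc]
  · simp

lemma Wmat_conj (d : ℕ) [NeZero d] (hde : Even d) :
    (Wmat d)ᴴ * (Theta d * Wmat d) = -Theta d := by
  obtain ⟨d', rfl⟩ : ∃ d', d = d' + 1 := ⟨d - 1, (Nat.succ_pred_eq_of_pos (NeZero.pos d)).symm⟩
  ext a b
  simp only [Matrix.mul_apply, Theta, Wmat, Matrix.conjTranspose_apply, Matrix.of_apply,
    Matrix.diagonal_apply, apply_ite (star : ℂ → ℂ), star_one, star_zero, ite_mul, one_mul,
    zero_mul, mul_ite, mul_one, mul_zero]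
  have hinner : ∀ k : Fin (d'+1),
      (∑ l : Fin (d'+1), if l + 1 = b then (if k = l then (-1:ℂ)^((k:ℕ)+1) else 0) else 0)
        = if k + 1 = b then (-1:ℂ)^((k:ℕ)+1) else 0 := by
    intro k
    rw [Finset.sum_eq_single k] <;> simp +contextual [eq_comm]
  simp only [hinner]
  rw [Finset.sum_eq_single (a - 1)]
  · rw [sub_add_cancel]
    have key : (-1:ℂ)^(((a-1 : Fin (d'+1)):ℕ)+1) = -(-1:ℂ)^((a:ℕ)+1) := by
      rw [Fin.coe_sub_one]
      by_cases h : a = 0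
      · simp only [h, if_pos rfl, Fin.val_zero, if_true]
        rw [hde.neg_one_pow]
        norm_num
      · rw [if_neg h]
        have ha : 1 ≤ (a:ℕ) := Nat.one_le_iff_ne_zero.mpr (fun hc => h (Fin.ext hc))
        have : (a:ℕ) - 1 + 1 = (a:ℕ) := Nat.succ_pred_eq_of_pos ha
        rw [this, pow_succ]
        ring
    by_cases hab : a = b
    · subst hab
      rw [Matrix.neg_apply, Matrix.diagonal_apply_eq, key]
      simp
    · rw [Matrix.neg_apply, Matrix.diagonal_apply_ne _ hab, neg_zero]
      simp [hab]
  · intro c _ hc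
    rw [if_neg]
    intro hcontra
    exact hc (by rw [← hcontra, add_sub_cancel_right])
  · simp

lemma Theta_trace (d : ℕ) (hde : Even d) : (Theta d).trace = 0 := by
  rw [Theta, Matrix.trace_diagonal]
  rw [Fin.sum_univ_eq_sum_range (fun k => (-1:ℂ)^(k+1))]
  have : ∀ k, (-1:ℂ)^(k+1) = (-1) * (-1)^k := fun k => by ring
  simp only [this, ← Finset.mul_sum, neg_one_geom_sum]
  simp [hde]

lemma Theta_mul_self (d : ℕ) : Theta d * Theta d = 1 := by
  rw [Theta, Matrix.diagonal_mul_diagonal]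
  have : (fun k : Fin d => (-1:ℂ) ^ ((k:ℕ)+1) * (-1) ^ ((k:ℕ)+1)) = fun _ => 1 := by
    funext k
    rw [← pow_add]
    exact Even.neg_one_pow ⟨(k:ℕ)+1, by ring⟩
  rw [this, Matrix.diagonal_one]

lemma trace_theta_rho (d : ℕ) (hd : 0 < d) (hde : Even d) (ε : ℝ) :
    (Theta d * rho0 d ε).trace = ((8 * ε : ℝ) : ℂ) := by
  have hd0 : (d : ℂ) ≠ 0 := Nat.cast_ne_zero.mpr hd.ne'
  rw [rho0, Matrix.mul_smul, Matrix.trace_smul, mul_add, Matrix.mul_smul,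
    Matrix.trace_add, Matrix.trace_smul, mul_one, Theta_trace d hde,
    Theta_mul_self d, Matrix.trace_one]
  simp only [zero_add, smul_eq_mul]
  field_simp
  simp only [Fintype.card_fin]
  ring

lemma pair_map {G : Type*} [MeasurableSpace G] (μ : Measure G) [IsProbabilityMeasure μ]
    {N : ℕ} {i j : Fin N} (hij : i ≠ j) :
    (Measure.pi fun _ : Fin N => μ).map (fun U => (U i, U j)) = μ.prod μ := by
  refine (Measure.prod_eq ?_).symm
  intro s t hs ht
  rw [Measure.map_apply ((measurable_pi_apply i).prodMk (measurable_pi_apply j)) (hs.prod ht)]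
  have hpre : (fun U : Fin N → G => (U i, U j)) ⁻¹' (s ×ˢ t)
      = Set.pi Set.univ (fun k => if k = i then s else if k = j then t else Set.univ) := by
    ext U
    simp only [Set.mem_preimage, Set.mem_prod, Set.mem_univ_pi]
    constructor
    · rintro ⟨h1, h2⟩ k
      by_cases hki : k = i
      · subst hki; simp [if_pos rfl, h1]
      · by_cases hkj : k = j
        · subst hkj; simp [if_neg hki, h2]
        · simp [hki, hkj]
    · intro h
      constructor
      · have := h i; simpa using this
      · have := h j; simpa [hij.symm] using this
  rw [hpre, Measure.pi_pi]
  rw [← Finset.prod_subset (Finset.subset_univ ({i, j} : Finset (Fin N)))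
      (fun k _ hk => by
        simp only [Finset.mem_insert, Finset.mem_singleton, not_or] at hk
        simp [hk.1, hk.2])]
  rw [Finset.prod_pair hij]
  rw [if_pos rfl, if_neg hij.symm, if_pos rfl]

/-- The single-variable integral vanishes. -/
lemma inner_zero (d : ℕ) (hd : 0 < d) (hde : Even d)
    [MeasurableSpace (Matrix.unitaryGroup (Fin d) ℂ)]
    [BorelSpace (Matrix.unitaryGroup (Fin d) ℂ)]
    (μ : Measure (Matrix.unitaryGroup (Fin d) ℂ))
    [μ.IsHaarMeasure] [IsProbabilityMeasure μ] (ε : ℝ) :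
    ∫ y : Matrix.unitaryGroup (Fin d) ℂ,
      ((Theta d * (y : Matrix (Fin d) (Fin d) ℂ) * rho0 d ε
        * (y : Matrix (Fin d) (Fin d) ℂ)ᴴ).trace).re ∂μ = 0 := by
  haveI : NeZero d := ⟨hd.ne'⟩
  set W : Matrix.unitaryGroup (Fin d) ℂ := ⟨Wmat d, Wmat_mem d⟩ with hWdef
  set f : Matrix.unitaryGroup (Fin d) ℂ → ℝ := fun y =>
    ((Theta d * (y : Matrix (Fin d) (Fin d) ℂ) * rho0 d ε
      * (y : Matrix (Fin d) (Fin d) ℂ)ᴴ).trace).re with hf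
  have key : ∀ y, f (W * y) = - f y := by
    intro y
    have hcoe : ((W * y : Matrix.unitaryGroup (Fin d) ℂ) : Matrix (Fin d) (Fin d) ℂ)
        = Wmat d * (y : Matrix (Fin d) (Fin d) ℂ) := rfl
    simp only [hf, hcoe, Matrix.conjTranspose_mul]
    have h1 : Theta d * (Wmat d * (y : Matrix (Fin d) (Fin d) ℂ)) * rho0 d ε
        * ((y : Matrix (Fin d) (Fin d) ℂ)ᴴ * (Wmat d)ᴴ)
        = (Theta d * Wmat d * (y : Matrix (Fin d) (Fin d) ℂ) * rho0 d ε
          * (y : Matrix (Fin d) (Fin d) ℂ)ᴴ) * (Wmat d)ᴴ := by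
      simp only [mul_assoc]
    rw [h1, Matrix.trace_mul_comm]
    have h2 : (Wmat d)ᴴ * (Theta d * Wmat d * (y : Matrix (Fin d) (Fin d) ℂ) * rho0 d ε
        * (y : Matrix (Fin d) (Fin d) ℂ)ᴴ)
        = -(Theta d * (y : Matrix (Fin d) (Fin d) ℂ) * rho0 d ε
          * (y : Matrix (Fin d) (Fin d) ℂ)ᴴ) := by
      calc (Wmat d)ᴴ * (Theta d * Wmat d * (y : Matrix (Fin d) (Fin d) ℂ) * rho0 d ε
          * (y : Matrix (Fin d) (Fin d) ℂ)ᴴ)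
          = ((Wmat d)ᴴ * (Theta d * Wmat d)) * (y : Matrix (Fin d) (Fin d) ℂ) * rho0 d ε
            * (y : Matrix (Fin d) (Fin d) ℂ)ᴴ := by simp only [mul_assoc]
        _ = (-(Theta d)) * (y : Matrix (Fin d) (Fin d) ℂ) * rho0 d ε
            * (y : Matrix (Fin d) (Fin d) ℂ)ᴴ := by rw [Wmat_conj d hde]
        _ = -(Theta d * (y : Matrix (Fin d) (Fin d) ℂ) * rho0 d ε
            * (y : Matrix (Fin d) (Fin d) ℂ)ᴴ) := by simp only [neg_mul]
    rw [h2, Matrix.trace_neg, Complex.neg_re]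
  have hsub := integral_mul_left_eq_self f W (μ := μ)
  have : ∫ y, f (W * y) ∂μ = - ∫ y, f y ∂μ := by
    simp only [key, integral_neg]
  rw [this] at hsub
  linarith [hsub]

/-- For `U₁, …, U_N` i.i.d. Haar unitaries,
`E[(1/N²) Σᵢⱼ Re Tr[Θ Uᵢᴴ Uⱼ ρ0 Uⱼᴴ Uᵢ]] = 8ε/N`. -/
theorem expectation_cross_term (d N : ℕ) (hd : 0 < d) (hdeven : Even d) (hN : 0 < N)
    (ε : ℝ) (hε : 0 < ε) (hε8 : ε ≤ 1 / 8)
    [MeasurableSpace (Matrix.unitaryGroup (Fin d) ℂ)]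
    [BorelSpace (Matrix.unitaryGroup (Fin d) ℂ)]
    (μ : Measure (Matrix.unitaryGroup (Fin d) ℂ))
    [μ.IsHaarMeasure] [IsProbabilityMeasure μ] :
    (∫ U : Fin N → Matrix.unitaryGroup (Fin d) ℂ,
        ((N : ℝ) ^ 2)⁻¹ *
          ∑ i, ∑ j, ((Theta d * (U i : Matrix (Fin d) (Fin d) ℂ)ᴴ *
            (U j : Matrix (Fin d) (Fin d) ℂ) * rho0 d ε *
            (U j : Matrix (Fin d) (Fin d) ℂ)ᴴ * (U i : Matrix (Fin d) (Fin d) ℂ)).trace).re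
        ∂(Measure.pi fun _ : Fin N => μ))
      = 8 * ε / N := by
  haveI : NeZero d := ⟨hd.ne'⟩
  set F : Fin N → Fin N → (Fin N → Matrix.unitaryGroup (Fin d) ℂ) → ℝ := fun i j U =>
    ((Theta d * (U i : Matrix (Fin d) (Fin d) ℂ)ᴴ * (U j : Matrix (Fin d) (Fin d) ℂ) * rho0 d ε * (U j : Matrix (Fin d) (Fin d) ℂ)ᴴ * (U i : Matrix (Fin d) (Fin d) ℂ)).trace).re with hF
  have hcont : ∀ i j, Continuous (F i j) := by
    intro i j
    apply Complex.continuous_re.comp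
    apply Continuous.matrix_trace
    have hi : Continuous (fun U : Fin N → Matrix.unitaryGroup (Fin d) ℂ => (U i : Matrix (Fin d) (Fin d) ℂ)) :=
      continuous_subtype_val.comp (continuous_apply i)
    have hj : Continuous (fun U : Fin N → Matrix.unitaryGroup (Fin d) ℂ => (U j : Matrix (Fin d) (Fin d) ℂ)) :=
      continuous_subtype_val.comp (continuous_apply j)
    exact ((((continuous_const.matrix_mul hi.matrix_conjTranspose).matrix_mul hj).matrix_mul
      continuous_const).matrix_mul hj.matrix_conjTranspose).matrix_mul hi
  have hint : ∀ i j, Integrable (F i j) (Measure.pi fun _ : Fin N => μ) := fun i j =>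
    continuous_integrable_of_compact _ (hcont i j)
  -- pull out the constant and the sums
  rw [MeasureTheory.integral_const_mul]
  rw [integral_finset_sum _ (fun i _ => integrable_finset_sum _ (fun j _ => hint i j))]
  have hswap : ∀ i : Fin N, (∫ U, ∑ j, F i j U ∂(Measure.pi fun _ : Fin N => μ))
      = ∑ j, ∫ U, F i j U ∂(Measure.pi fun _ : Fin N => μ) :=
    fun i => integral_finset_sum _ (fun j _ => hint i j)
  simp only [hswap]
  -- value of each integral
  have hval : ∀ i j, (∫ U, F i j U ∂(Measure.pi fun _ : Fin N => μ))
      = if i = j then 8 * ε else 0 := by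
    intro i j
    by_cases hij : i = j
    · subst hij
      rw [if_pos rfl]
      have hFconst : ∀ U : Fin N → Matrix.unitaryGroup (Fin d) ℂ, F i i U = 8 * ε := by
        intro U
        have h : (U i : Matrix (Fin d) (Fin d) ℂ)ᴴ * (U i : Matrix (Fin d) (Fin d) ℂ) = 1 := by
          have := (Matrix.mem_unitaryGroup_iff'.mp (U i).2)
          rwa [Matrix.star_eq_conjTranspose] at this
        have e2 : ∀ A : Matrix (Fin d) (Fin d) ℂ, A * (U i : Matrix (Fin d) (Fin d) ℂ)ᴴ * (U i : Matrix (Fin d) (Fin d) ℂ) = A := fun A => by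
          rw [mul_assoc, h, mul_one]
        have : Theta d * (U i : Matrix (Fin d) (Fin d) ℂ)ᴴ * (U i : Matrix (Fin d) (Fin d) ℂ) * rho0 d ε * (U i : Matrix (Fin d) (Fin d) ℂ)ᴴ * (U i : Matrix (Fin d) (Fin d) ℂ)
            = Theta d * rho0 d ε := by
          rw [e2, e2]
        rw [hF]
        simp only [this]
        rw [trace_theta_rho d hd hdeven ε]
        simp
      simp only [hFconst]
      simp [measure_univ]
    · rw [if_neg hij]
      -- off-diagonal: push to product measure
      set g : Matrix.unitaryGroup (Fin d) ℂ × Matrix.unitaryGroup (Fin d) ℂ → ℝ := fun p =>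
        ((Theta d * (p.1 : Matrix (Fin d) (Fin d) ℂ)ᴴ * (p.2 : Matrix (Fin d) (Fin d) ℂ) * rho0 d ε * (p.2 : Matrix (Fin d) (Fin d) ℂ)ᴴ * (p.1 : Matrix (Fin d) (Fin d) ℂ)).trace).re
        with hg
      have hgcont : Continuous g := by
        apply Complex.continuous_re.comp
        apply Continuous.matrix_trace
        have h1 : Continuous (fun p : Matrix.unitaryGroup (Fin d) ℂ × Matrix.unitaryGroup (Fin d) ℂ => (p.1 : Matrix (Fin d) (Fin d) ℂ)) :=
          continuous_subtype_val.comp continuous_fst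
        have h2 : Continuous (fun p : Matrix.unitaryGroup (Fin d) ℂ × Matrix.unitaryGroup (Fin d) ℂ => (p.2 : Matrix (Fin d) (Fin d) ℂ)) :=
          continuous_subtype_val.comp continuous_snd
        exact ((((continuous_const.matrix_mul h1.matrix_conjTranspose).matrix_mul h2).matrix_mul
          continuous_const).matrix_mul h2.matrix_conjTranspose).matrix_mul h1
      have hmeas : Measurable (fun U : Fin N → Matrix.unitaryGroup (Fin d) ℂ => (U i, U j)) :=
        (measurable_pi_apply i).prodMk (measurable_pi_apply j)
      have step1 : (∫ U, F i j U ∂(Measure.pi fun _ : Fin N => μ))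
          = ∫ p, g p ∂(μ.prod μ) := by
        rw [← pair_map μ hij]
        rw [integral_map hmeas.aemeasurable hgcont.aestronglyMeasurable]
      rw [step1]
      have hgint : Integrable g (μ.prod μ) := continuous_integrable_of_compact _ hgcont
      rw [integral_prod _ hgint]
      have hinner : ∀ x : Matrix.unitaryGroup (Fin d) ℂ, (∫ y, g (x, y) ∂μ)
          = ∫ y : Matrix.unitaryGroup (Fin d) ℂ, ((Theta d * (y : Matrix (Fin d) (Fin d) ℂ) * rho0 d ε * (y : Matrix (Fin d) (Fin d) ℂ)ᴴ).trace).re ∂μ := by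
        intro x
        rw [← integral_mul_left_eq_self (fun y => g (x, y)) x]
        congr 1
        funext y
        have hcoe : ((x * y : Matrix.unitaryGroup (Fin d) ℂ) : Matrix (Fin d) (Fin d) ℂ) = (x : Matrix (Fin d) (Fin d) ℂ) * (y : Matrix (Fin d) (Fin d) ℂ) := rfl
        have h : (x : Matrix (Fin d) (Fin d) ℂ)ᴴ * (x : Matrix (Fin d) (Fin d) ℂ) = 1 := by
          have := (Matrix.mem_unitaryGroup_iff'.mp x.2)
          rwa [Matrix.star_eq_conjTranspose] at this
        have e2 : ∀ A : Matrix (Fin d) (Fin d) ℂ, A * (x : Matrix (Fin d) (Fin d) ℂ)ᴴ * (x : Matrix (Fin d) (Fin d) ℂ) = A := fun A => by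
          rw [mul_assoc, h, mul_one]
        simp only [hg, hcoe, Matrix.conjTranspose_mul]
        congr 2
        calc Theta d * (x : Matrix (Fin d) (Fin d) ℂ)ᴴ * ((x : Matrix (Fin d) (Fin d) ℂ) * (y : Matrix (Fin d) (Fin d) ℂ)) * rho0 d ε
            * ((y : Matrix (Fin d) (Fin d) ℂ)ᴴ * (x : Matrix (Fin d) (Fin d) ℂ)ᴴ) * (x : Matrix (Fin d) (Fin d) ℂ)
            = Theta d * (x : Matrix (Fin d) (Fin d) ℂ)ᴴ * (x : Matrix (Fin d) (Fin d) ℂ) * (y : Matrix (Fin d) (Fin d) ℂ) * rho0 d ε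
              * (y : Matrix (Fin d) (Fin d) ℂ)ᴴ * ((x : Matrix (Fin d) (Fin d) ℂ)ᴴ * (x : Matrix (Fin d) (Fin d) ℂ)) := by simp only [mul_assoc]
          _ = Theta d * (y : Matrix (Fin d) (Fin d) ℂ) * rho0 d ε * (y : Matrix (Fin d) (Fin d) ℂ)ᴴ * ((x : Matrix (Fin d) (Fin d) ℂ)ᴴ * (x : Matrix (Fin d) (Fin d) ℂ)) := by rw [e2]
          _ = Theta d * (y : Matrix (Fin d) (Fin d) ℂ) * rho0 d ε * (y : Matrix (Fin d) (Fin d) ℂ)ᴴ := by rw [h, mul_one]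
      simp only [hinner]
      rw [inner_zero d hd hdeven μ ε]
      simp
  simp only [hval]
  simp only [Finset.sum_ite_eq, Finset.mem_univ, if_true]
  rw [Finset.sum_const, Finset.card_univ, Fintype.card_fin]
  have hN0 : (N : ℝ) ≠ 0 := Nat.cast_ne_zero.mpr hN.ne'
  field_simp
  ring
end
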